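/- Let (p_n), (q_n) be sequences with 0 < q_n < p_n ≤ 1 for all n, p_n → 1, q_n → 1, p_n^n → a and q_n^n → b for some real numbers a, b. Then for every x ∈ [0,1], lim_{n→∞} [n]_{p_n,q_n} · B_{n,p_n,q_n}((t-x)²; x) = a x - a x². -/

import Mathlib

open Finset Set Filter Topology

/-- The (p,q)-integer `[n]_{p,q} = ∑_{i=0}^{n-1} p^(n-1-i) q^i`. -/
noncomputable def pqInt (p q : ℝ) (n : ℕ) : ℝ :=
  ∑ i ∈ Finset.range n, p ^ (n - 1 - i) * q ^ i

/-- The (p,q)-factorial `[n]_{p,q}! = ∏_{j=1}^n [j]_{p,q}`. -/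
noncomputable def pqFactorial (p q : ℝ) (n : ℕ) : ℝ :=
  ∏ j ∈ Finset.range n, pqInt p q (j + 1)

/-- The (p,q)-binomial coefficient. -/
noncomputable def pqChoose (p q : ℝ) (n k : ℕ) : ℝ :=
  pqFactorial p q n / (pqFactorial p q k * pqFactorial p q (n - k))

/-- The node `p^(n-k) [k]_{p,q} / [n]_{p,q}` of the (p,q)-Bernstein operator. -/
noncomputable def pqNode (p q : ℝ) (n k : ℕ) : ℝ :=
  p ^ (n - k) * pqInt p q k / pqInt p q n

/-- The basis function
`p^((k(k-1)-n(n-1))/2) C(n,k)_{p,q} x^k ∏_{s=0}^{n-k-1} (p^s - q^s x)`,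
where `p^((k(k-1)-n(n-1))/2)` is written as `p^(k(k-1)/2) / p^(n(n-1)/2)`. -/
noncomputable def pqBasis (p q : ℝ) (n k : ℕ) (x : ℝ) : ℝ :=
  (p ^ (k.choose 2) / p ^ (n.choose 2)) * pqChoose p q n k * x ^ k *
    ∏ s ∈ Finset.range (n - k), (p ^ s - q ^ s * x)

/-- The (p,q)-Bernstein operator `B_{n,p,q}(f;x)`. -/
noncomputable def pqBernstein (p q : ℝ) (n : ℕ) (f : ℝ → ℝ) (x : ℝ) : ℝ :=
  ∑ k ∈ Finset.range (n + 1), pqBasis p q n k x * f (pqNode p q n k)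

/-- The bivariate (p,q)-Bernstein operator
`B_{n,m}^{(p₁,q₁),(p₂,q₂)}(f;x,y)`. -/
noncomputable def pqBernstein2 (p₁ q₁ p₂ q₂ : ℝ) (n m : ℕ)
    (f : ℝ → ℝ → ℝ) (x y : ℝ) : ℝ :=
  ∑ k ∈ Finset.range (n + 1), ∑ j ∈ Finset.range (m + 1),
    pqBasis p₁ q₁ n k x * pqBasis p₂ q₂ m j y *
      f (pqNode p₁ q₁ n k) (pqNode p₂ q₂ m j)

section
variable {p q : ℝ} (hq : 0 < q) (hqp : q < p)

lemma pqInt_zero : pqInt p q 0 = 0 := by simp [pqInt]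

lemma pqInt_succ (n : ℕ) : pqInt p q (n + 1) = p ^ n + q * pqInt p q n := by
  rw [pqInt, Finset.sum_range_succ', pqInt, Finset.mul_sum]
  simp only [pow_zero, mul_one, Nat.add_sub_cancel]
  rw [add_comm]
  congr 1
  refine Finset.sum_congr rfl fun i hi => ?_
  have : n - (i + 1) = n - 1 - i := by omega
  rw [this, pow_succ]
  ring

lemma pqInt_add (m n : ℕ) :
    pqInt p q (m + n) = p ^ n * pqInt p q m + q ^ m * pqInt p q n := by
  rw [pqInt, Finset.sum_range_add, pqInt, pqInt, Finset.mul_sum, Finset.mul_sum]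
  congr 1
  · refine Finset.sum_congr rfl fun i hi => ?_
    simp only [Finset.mem_range] at hi
    have : m + n - 1 - i = n + (m - 1 - i) := by omega
    rw [this, pow_add]; ring
  · refine Finset.sum_congr rfl fun i hi => ?_
    simp only [Finset.mem_range] at hi
    have : m + n - 1 - (m + i) = n - 1 - i := by omega
    rw [this, pow_add]; ring

include hq hqp in
lemma pqInt_pos (n : ℕ) : 0 < pqInt p q (n + 1) := by
  have hp : 0 < p := hq.trans hqp
  refine Finset.sum_pos (fun i _ => by positivity) ⟨0, by simp⟩

lemma pqFactorial_zero : pqFactorial p q 0 = 1 := by simp [pqFactorial]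

lemma pqFactorial_succ (n : ℕ) :
    pqFactorial p q (n + 1) = pqFactorial p q n * pqInt p q (n + 1) :=
  Finset.prod_range_succ _ _

include hq hqp in
lemma pqFactorial_pos (n : ℕ) : 0 < pqFactorial p q n :=
  Finset.prod_pos fun i _ => pqInt_pos hq hqp i

include hq hqp in
lemma key1 (n k : ℕ) :
    pqInt p q (k + 1) * pqChoose p q (n + 1) (k + 1) =
      pqInt p q (n + 1) * pqChoose p q n k := by
  have h1 : (n + 1) - (k + 1) = n - k := by omega
  rw [pqChoose, pqChoose, h1, pqFactorial_succ, pqFactorial_succ]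
  have hk := (pqFactorial_pos hq hqp k).ne'
  have hn := (pqFactorial_pos hq hqp n).ne'
  have hnk := (pqFactorial_pos hq hqp (n - k)).ne'
  have hk1 := (pqInt_pos hq hqp k).ne'
  field_simp

include hq hqp in
lemma pascal (n k : ℕ) (hkn : k < n) :
    pqChoose p q (n + 1) (k + 1) =
      p ^ (k + 1) * pqChoose p q n (k + 1) + q ^ (n - k) * pqChoose p q n k := by
  have hsplit : pqInt p q (n + 1)
      = p ^ (k + 1) * pqInt p q (n - k) + q ^ (n - k) * pqInt p q (k + 1) := by
    have : n - k + (k + 1) = n + 1 := by omega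
    rw [← this, pqInt_add]
  have h1 : (n + 1) - (k + 1) = n - k := by omega
  have h2 : n - (k + 1) = n - k - 1 := by omega
  have h3 : n - k = (n - k - 1) + 1 := by omega
  rw [pqChoose, pqChoose, pqChoose, h1, h2, pqFactorial_succ n, pqFactorial_succ k]
  rw [h3, pqFactorial_succ (n - k - 1), ← h3]
  have hk := (pqFactorial_pos hq hqp k).ne'
  have hn := (pqFactorial_pos hq hqp n).ne'
  have hnk := (pqFactorial_pos hq hqp (n - k - 1)).ne'
  have hik := (pqInt_pos hq hqp k).ne'
  have hink : pqInt p q (n - k) ≠ 0 := by rw [h3]; exact (pqInt_pos hq hqp (n - k - 1)).ne'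
  field_simp
  rw [hsplit]
  ring

include hq hqp in
lemma pqChoose_zero (n : ℕ) : pqChoose p q n 0 = 1 := by
  have hn := (pqFactorial_pos hq hqp n).ne'
  simp [pqChoose, pqFactorial_zero, hn]

include hq hqp in
lemma pqChoose_self (n : ℕ) : pqChoose p q n n = 1 := by
  have hn := (pqFactorial_pos hq hqp n).ne'
  simp [pqChoose, pqFactorial_zero, hn]

lemma choose2_succ (k : ℕ) : (k + 1).choose 2 = k.choose 2 + k := by
  rw [Nat.choose_succ_succ]
  simp [Nat.choose_one_right, Nat.add_comm]

variable (x : ℝ)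

include hq hqp in
lemma basis_key (n k : ℕ) (hkn : k ≤ n) :
    pqBasis p q (n + 1) (k + 1) x * (p ^ (n - k) * pqInt p q (k + 1)) =
      pqInt p q (n + 1) * x * pqBasis p q n k x := by
  have hp : (0:ℝ) < p := hq.trans hqp
  have hkey := key1 hq hqp n k
  have h1 : (n + 1) - (k + 1) = n - k := by omega
  have hpn : p ^ n = p ^ k * p ^ (n - k) := by
    rw [← pow_add]; congr 1; omega
  have h2 := (pqInt_pos hq hqp k).ne'
  have hch : pqChoose p q (n + 1) (k + 1)
      = pqInt p q (n + 1) * pqChoose p q n k / pqInt p q (k + 1) := by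
    rw [eq_div_iff h2]; linarith [hkey]
  simp only [pqBasis, h1, choose2_succ, pow_add, pow_succ, hch]
  rw [hpn]
  field_simp

include hq hqp in
lemma basis_self (n : ℕ) : pqBasis p q n n x = x ^ n := by
  have hp : (0:ℝ) < p := hq.trans hqp
  simp [pqBasis, pqChoose_self hq hqp, Nat.sub_self, div_self (pow_ne_zero _ hp.ne')]

include hq hqp in
lemma basis_zero_succ (n : ℕ) :
    pqBasis p q (n + 1) 0 x = pqBasis p q n 0 x * (1 - (q / p) ^ n * x) := by
  have hp : (0:ℝ) < p := hq.trans hqp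
  simp only [pqBasis, pqChoose_zero hq hqp, choose2_succ, Nat.sub_zero, pow_add,
    Finset.prod_range_succ, div_pow]
  field_simp
  ring

include hq hqp in
lemma basis_pascal (n k : ℕ) (hkn : k < n) :
    pqBasis p q (n + 1) (k + 1) x =
      pqBasis p q n (k + 1) x * (1 - (q / p) ^ (n - (k + 1)) * x) +
        (q / p) ^ (n - k) * x * pqBasis p q n k x := by
  have hp : (0:ℝ) < p := hq.trans hqp
  have h1 : (n + 1) - (k + 1) = n - k := by omega
  have h2 : n - (k + 1) = n - k - 1 := by omega
  have h3 : n - k = (n - k - 1) + 1 := by omega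
  have hpk : p ^ (n - k) = p ^ (n - k - 1) * p := by rw [← pow_succ]; congr 1
  have hqk : q ^ (n - k) = q ^ (n - k - 1) * q := by rw [← pow_succ]; congr 1
  have hpn : p ^ n = p ^ k * p ^ (n - k - 1) * p := by
    rw [← pow_add, ← pow_succ]; congr 1; omega
  rw [pqBasis, pqBasis, pqBasis, pascal hq hqp n k hkn, h1, h2]
  rw [h3, Finset.prod_range_succ, ← h3]
  simp only [choose2_succ, pow_add, div_pow, hpk, hqk, pow_succ]
  rw [hpn]
  field_simp


include hq hqp in
lemma sum_basis (n : ℕ) : ∑ k ∈ Finset.range (n + 1), pqBasis p q n k x = 1 := by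
  induction n with
  | zero => simpa using basis_self hq hqp x 0
  | succ n ih =>
    have hsplit : ∑ k ∈ Finset.range (n + 1),
          pqBasis p q n k x * (1 - (q / p) ^ (n - k) * x)
        + ∑ k ∈ Finset.range (n + 1), (q / p) ^ (n - k) * x * pqBasis p q n k x = 1 := by
      rw [← Finset.sum_add_distrib]
      calc ∑ k ∈ Finset.range (n + 1),
            (pqBasis p q n k x * (1 - (q / p) ^ (n - k) * x)
              + (q / p) ^ (n - k) * x * pqBasis p q n k x)
          = ∑ k ∈ Finset.range (n + 1), pqBasis p q n k x :=
            Finset.sum_congr rfl fun k _ => by ring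
        _ = 1 := ih
    have e2 : ∑ k ∈ Finset.range n,
          pqBasis p q n (k + 1) x * (1 - (q / p) ^ (n - (k + 1)) * x)
        + pqBasis p q n 0 x * (1 - (q / p) ^ n * x)
        = ∑ k ∈ Finset.range (n + 1), pqBasis p q n k x * (1 - (q / p) ^ (n - k) * x) := by
      rw [Finset.sum_range_succ']
      norm_num
    have e3 : ∑ k ∈ Finset.range n, (q / p) ^ (n - k) * x * pqBasis p q n k x + x ^ (n + 1)
        = ∑ k ∈ Finset.range (n + 1), (q / p) ^ (n - k) * x * pqBasis p q n k x := by
      rw [Finset.sum_range_succ, Nat.sub_self, basis_self hq hqp x n]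
      ring
    rw [Finset.sum_range_succ', Finset.sum_range_succ,
      Finset.sum_congr rfl (fun k hk => basis_pascal hq hqp x n k (Finset.mem_range.mp hk)),
      Finset.sum_add_distrib, basis_zero_succ hq hqp x, basis_self hq hqp x (n + 1)]
    linarith

include hq hqp in
lemma sum_basis_node1 (n : ℕ) :
    ∑ k ∈ Finset.range (n + 2), pqBasis p q (n + 1) k x * (p ^ ((n + 1) - k) * pqInt p q k)
      = pqInt p q (n + 1) * x := by
  rw [Finset.sum_range_succ']
  have h0 : pqBasis p q (n + 1) 0 x * (p ^ ((n + 1) - 0) * pqInt p q 0) = 0 := by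
    rw [pqInt_zero]; ring
  rw [h0, add_zero]
  have e : ∀ k ∈ Finset.range (n + 1),
      pqBasis p q (n + 1) (k + 1) x * (p ^ ((n + 1) - (k + 1)) * pqInt p q (k + 1))
        = pqInt p q (n + 1) * x * pqBasis p q n k x := by
    intro k hk
    rw [(by omega : (n + 1) - (k + 1) = n - k)]
    exact basis_key hq hqp x n k (by simpa using Nat.lt_succ_iff.mp (Finset.mem_range.mp hk))
  rw [Finset.sum_congr rfl e, ← Finset.mul_sum, sum_basis hq hqp x n, mul_one]

include hq hqp in
lemma sum_basis_node2 (n : ℕ) :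
    ∑ k ∈ Finset.range (n + 3), pqBasis p q (n + 2) k x * (p ^ ((n + 2) - k) * pqInt p q k) ^ 2
      = pqInt p q (n + 2) * (p ^ (n + 1) * x + q * pqInt p q (n + 1) * x ^ 2) := by
  rw [Finset.sum_range_succ']
  have h0 : pqBasis p q (n + 2) 0 x * (p ^ ((n + 2) - 0) * pqInt p q 0) ^ 2 = 0 := by
    rw [pqInt_zero]; ring
  rw [h0, add_zero]
  have e : ∀ k ∈ Finset.range (n + 2),
      pqBasis p q (n + 2) (k + 1) x * (p ^ ((n + 2) - (k + 1)) * pqInt p q (k + 1)) ^ 2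
        = pqInt p q (n + 2) * x * (p ^ (n + 1) * pqBasis p q (n + 1) k x)
          + pqInt p q (n + 2) * x * q *
            (pqBasis p q (n + 1) k x * (p ^ ((n + 1) - k) * pqInt p q k)) := by
    intro k hk
    have hk' : k ≤ n + 1 := by have := Finset.mem_range.mp hk; omega
    have h1 : (n + 2) - (k + 1) = (n + 1) - k := by omega
    have hb := basis_key hq hqp x (n + 1) k hk'
    have hpp : p ^ ((n + 1) - k) * p ^ k = p ^ (n + 1) := by
      rw [← pow_add]; congr 1; omega
    rw [h1]
    calc pqBasis p q (n + 2) (k + 1) x * (p ^ ((n + 1) - k) * pqInt p q (k + 1)) ^ 2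
        = (pqBasis p q (n + 2) (k + 1) x * (p ^ ((n + 1) - k) * pqInt p q (k + 1))) *
            (p ^ ((n + 1) - k) * pqInt p q (k + 1)) := by ring
      _ = (pqInt p q (n + 2) * x * pqBasis p q (n + 1) k x) *
            (p ^ ((n + 1) - k) * pqInt p q (k + 1)) := by rw [hb]
      _ = _ := by
          rw [pqInt_succ k]
          linear_combination (pqInt p q (n + 2) * x * pqBasis p q (n + 1) k x) * hpp
  rw [Finset.sum_congr rfl e, Finset.sum_add_distrib, ← Finset.mul_sum, ← Finset.mul_sum,
    ← Finset.mul_sum, sum_basis hq hqp x (n + 1), sum_basis_node1 hq hqp x n]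
  ring

include hq hqp in
lemma central_moment (n : ℕ) :
    pqInt p q (n + 2) * pqBernstein p q (n + 2) (fun t => (t - x) ^ 2) x
      = p ^ (n + 1) * (x - x ^ 2) := by
  have hN : pqInt p q (n + 2) ≠ 0 := (pqInt_pos hq hqp (n + 1)).ne'
  set N := pqInt p q (n + 2) with hNdef
  have key : ∀ k, pqBasis p q (n + 2) k x * ((pqNode p q (n + 2) k - x) ^ 2) * N ^ 2
      = pqBasis p q (n + 2) k x * (p ^ ((n + 2) - k) * pqInt p q k) ^ 2
        - 2 * (N * x) * (pqBasis p q (n + 2) k x * (p ^ ((n + 2) - k) * pqInt p q k))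
        + N ^ 2 * x ^ 2 * pqBasis p q (n + 2) k x := by
    intro k
    have : (pqNode p q (n + 2) k - x) * N = p ^ ((n + 2) - k) * pqInt p q k - x * N := by
      rw [pqNode, ← hNdef, sub_mul, div_mul_cancel₀ _ hN]
    have h2 : (pqNode p q (n + 2) k - x) ^ 2 * N ^ 2
        = (p ^ ((n + 2) - k) * pqInt p q k - x * N) ^ 2 := by
      rw [← mul_pow, this]
    calc pqBasis p q (n + 2) k x * ((pqNode p q (n + 2) k - x) ^ 2) * N ^ 2
        = pqBasis p q (n + 2) k x * ((pqNode p q (n + 2) k - x) ^ 2 * N ^ 2) := by ring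
      _ = pqBasis p q (n + 2) k x * (p ^ ((n + 2) - k) * pqInt p q k - x * N) ^ 2 := by rw [h2]
      _ = _ := by ring
  have hn1 : ∑ k ∈ Finset.range (n + 3),
        pqBasis p q (n + 2) k x * (p ^ ((n + 2) - k) * pqInt p q k) = N * x := by
    have := sum_basis_node1 hq hqp x (n + 1)
    norm_num at this ⊢
    convert this using 2
  have hsum : pqBernstein p q (n + 2) (fun t => (t - x) ^ 2) x * N ^ 2
      = N * (p ^ (n + 1) * x + q * pqInt p q (n + 1) * x ^ 2)
        - 2 * (N * x) * (N * x) + N ^ 2 * x ^ 2 * 1 := by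
    rw [pqBernstein, Finset.sum_mul]
    rw [Finset.sum_congr rfl (fun k _ => key k)]
    rw [Finset.sum_add_distrib, Finset.sum_sub_distrib, ← Finset.mul_sum, ← Finset.mul_sum]
    rw [sum_basis_node2 hq hqp x n, sum_basis hq hqp x (n + 2), hn1]
  have hrec : N = p ^ (n + 1) + q * pqInt p q (n + 1) := pqInt_succ (n + 1)
  have h' : (N * pqBernstein p q (n + 2) (fun t => (t - x) ^ 2) x) * N
      = (p ^ (n + 1) * (x - x ^ 2)) * N := by
    linear_combination hsum - N * x ^ 2 * hrec
  exact mul_right_cancel₀ hN h'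
end

theorem pqBernstein_second_central_moment_limit (p q : ℕ → ℝ) (a b : ℝ)
    (h : ∀ n, 0 < q n ∧ q n < p n ∧ p n ≤ 1)
    (hp : Filter.Tendsto p Filter.atTop (nhds 1))
    (hq : Filter.Tendsto q Filter.atTop (nhds 1))
    (ha : Filter.Tendsto (fun n => (p n) ^ n) Filter.atTop (nhds a))
    (hb : Filter.Tendsto (fun n => (q n) ^ n) Filter.atTop (nhds b))
    (x : ℝ) (hx : x ∈ Set.Icc (0 : ℝ) 1) :
    Filter.Tendsto
      (fun n => pqInt (p n) (q n) n *
        pqBernstein (p n) (q n) n (fun t => (t - x) ^ 2) x)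
      Filter.atTop (nhds (a * x - a * x ^ 2)) := by
  have hlim : Filter.Tendsto (fun n => (p n) ^ (n - 1) * (x - x ^ 2))
      Filter.atTop (nhds (a * x - a * x ^ 2)) := by
    have h1 : Filter.Tendsto (fun n => (p n) ^ n / p n) Filter.atTop (nhds (a / 1)) :=
      ha.div hp one_ne_zero
    have h2 : Filter.Tendsto (fun n => (p n) ^ (n - 1)) Filter.atTop (nhds a) := by
      rw [div_one] at h1
      refine h1.congr' ?_
      filter_upwards [eventually_ge_atTop 1] with n hn
      have hpn : p n ≠ 0 := by have := (h n); linarith [this.1, this.2.1]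
      have hpow : (p n) ^ n = (p n) ^ (n - 1) * p n := by
        rw [← pow_succ]; congr 1; omega
      rw [hpow, mul_div_cancel_right₀ _ hpn]
    have h3 := h2.mul_const (x - x ^ 2)
    rw [show a * x - a * x ^ 2 = a * (x - x ^ 2) by ring]
    exact h3
  refine hlim.congr' ?_
  filter_upwards [eventually_ge_atTop 2] with n hn
  obtain ⟨m, rfl⟩ : ∃ m, n = m + 2 := ⟨n - 2, by omega⟩
  have hh := h (m + 2)
  rw [central_moment hh.1 hh.2.1 x m]
  norm_num
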